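/- (Toy model mimicking the standard random walk: recurrence in every fiber.) Let G = {g₁, g₂, g₃, g₄} = {(1,0), (0,1), (−1,0), (0,−1)} ⊂ ℤ², let Ω = {1,2,3}, and let e : {0,1,2,3} × {1,2,3,4} × Ω → G be a function such that for every incoming index i ∈ {1,2,3,4} and every state ω ∈ Ω, the map j ↦ e(j, i, ω) is a bijection from {0,1,2,3} onto G. Let K₄ be the 4-baker's map on [0,1)². For λ ∈ Ω^{ℤ²} and x = (y,i) ∈ [0,1)² × {1,2,3,4}, define recursively γ₀ = 0, y₀ = y, i₀ = i, and for k ≥ 0: h_{k+1} = e(⌊4 (y_k)₁⌋, i_k, λ_{γ_k}), γ_{k+1} = γ_k + h_{k+1}, y_{k+1} = K₄(y_k), i_{k+1} = the index of h_{k+1}. Let μ₁ be the product of the uniform probability measure on {1,2,3,4} and Lebesgue measure on [0,1)². Then for every environment λ ∈ Ω^{ℤ²}, for μ₁-almost every x, the position γ_n(x, λ) equals (0,0) for infinitely many n. -/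

import Mathlib

open MeasureTheory ENNReal Filter
open scoped NNReal

/-- The four primitive directions `g₁ = E, g₂ = N, g₃ = W, g₄ = S` of `ℤ²`. -/
def dirG : Fin 4 → ℤ × ℤ := ![(1, 0), (0, 1), (-1, 0), (0, -1)]

/-- The `4`-baker's map `K₄(y₁, y₂) = ({4 y₁}, (y₂ + ⌊4 y₁⌋)/4)`. -/
noncomputable def baker4 (y : ℝ × ℝ) : ℝ × ℝ :=
  (Int.fract (4 * y.1), (y.2 + (⌊(4 : ℝ) * y.1⌋ : ℝ)) / 4)

/-- The base-4 digit `⌊4 y⌋ ∈ {0,1,2,3}` of `y ∈ [0,1)`, as an element of `Fin 4`. -/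
noncomputable def digit4 (y : ℝ) : Fin 4 :=
  ⟨(⌊(4 : ℝ) * y⌋).toNat % 4, Nat.mod_lt _ (by norm_num)⟩

/-- The trajectory `k ↦ (γ_k, y_k, i_k)` of the point `x = (y, i)` in the environment
`lam`, where `e j i ω` is the index in `G` of the exit direction `e(j, i, ω)`:
`γ₀ = 0`, `y₀ = y`, `i₀ = i`, and `h_{k+1} = g_{e(⌊4 (y_k)₁⌋, i_k, lam γ_k)}`,
`γ_{k+1} = γ_k + h_{k+1}`, `y_{k+1} = K₄ y_k`, `i_{k+1} = index of h_{k+1}`. -/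
noncomputable def traj4 (e : Fin 4 → Fin 4 → Fin 3 → Fin 4) (lam : ℤ × ℤ → Fin 3)
    (x : (ℝ × ℝ) × Fin 4) : ℕ → (ℤ × ℤ) × ((ℝ × ℝ) × Fin 4)
  | 0 => ((0, 0), x)
  | k + 1 =>
      let s := traj4 e lam x k
      let j : Fin 4 := e (digit4 s.2.1.1) s.2.2 (lam s.1)
      (s.1 + dirG j, (baker4 s.2.1, j))

/-- The measure `μ₁`: product of Lebesgue measure on `[0,1)²` and the uniform
probability measure on the four incoming directions. -/
noncomputable def muOne : Measure ((ℝ × ℝ) × Fin 4) :=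
  (volume.restrict (Set.Ico (0:ℝ) 1 ×ˢ Set.Ico (0:ℝ) 1)).prod
    ((4 : ℝ≥0∞)⁻¹ • Measure.count)

namespace Stmt7


noncomputable def T (z : ℝ) : ℝ := Int.fract (4 * z)

noncomputable def dig (k : ℕ) (z : ℝ) : Fin 4 := digit4 (T^[k] z)

/-- value of digit4 on [0,1) -/
lemma digit4_coe {z : ℝ} (h0 : 0 ≤ z) (h1 : z < 1) : ((digit4 z : Fin 4) : ℕ) = (⌊(4:ℝ)*z⌋).toNat := by
  have h4 : ⌊(4:ℝ)*z⌋ < 4 := by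
    have : (4:ℝ)*z < 4 := by nlinarith
    exact Int.floor_lt.mpr (by exact_mod_cast this)
  have : (⌊(4:ℝ)*z⌋).toNat < 4 := by omega
  simpa [digit4] using Nat.mod_eq_of_lt this

lemma digit4_eq_iff {z : ℝ} (h0 : 0 ≤ z) (h1 : z < 1) (a : Fin 4) :
    digit4 z = a ↔ ((a:ℕ):ℝ)/4 ≤ z ∧ z < ((a:ℕ)+1)/4 := by
  have hfl0 : (0:ℤ) ≤ ⌊(4:ℝ)*z⌋ := Int.floor_nonneg.mpr (by nlinarith)
  constructor
  · intro h
    have hc : ((a:ℕ):ℤ) = ⌊(4:ℝ)*z⌋ := by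
      have := digit4_coe h0 h1
      rw [h] at this
      omega
    have hcr : ((a:ℕ):ℝ) = ((⌊(4:ℝ)*z⌋:ℤ):ℝ) := by exact_mod_cast hc
    have h1' : (⌊(4:ℝ)*z⌋ : ℝ) ≤ 4*z := Int.floor_le _
    have h2' : 4*z < ⌊(4:ℝ)*z⌋ + 1 := Int.lt_floor_add_one _
    constructor
    · rw [div_le_iff₀ (by norm_num : (0:ℝ) < 4)]
      calc ((a:ℕ):ℝ) = ((⌊(4:ℝ)*z⌋ : ℤ) : ℝ) := hcr
        _ ≤ 4*z := h1'
        _ = z*4 := by ring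
    · rw [lt_div_iff₀ (by norm_num : (0:ℝ) < 4)]
      nlinarith [hcr, h2']
  · rintro ⟨hl, hr⟩
    have hfl : ⌊(4:ℝ)*z⌋ = (a:ℕ) := by
      rw [Int.floor_eq_iff]
      constructor
      · push_cast; nlinarith
      · push_cast; nlinarith
    have : ((digit4 z : Fin 4) : ℕ) = (a : ℕ) := by
      rw [digit4_coe h0 h1, hfl]; simp
    exact Fin.ext this

/-- on the matching interval, T acts affinely -/
lemma T_eq {z : ℝ} (a : Fin 4) (h : ((a:ℕ):ℝ)/4 ≤ z) (h' : z < ((a:ℕ)+1)/4) :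
    T z = 4*z - (a:ℕ) := by
  have hfl : ⌊(4:ℝ)*z⌋ = (a:ℕ) := by
    rw [Int.floor_eq_iff]
    constructor
    · push_cast; nlinarith
    · push_cast; nlinarith
  simp [T, Int.fract, hfl]

def tailSeq (c : ℕ → Fin 4) : ℕ → Fin 4 := fun k => c (k+1)

def valN : (n : ℕ) → (ℕ → Fin 4) → ℕ
  | 0, _ => 0
  | n+1, c => (c 0 : ℕ) * 4^n + valN n (tailSeq c)

lemma valN_lt (n : ℕ) (c : ℕ → Fin 4) : valN n c + 1 ≤ 4^n := by
  induction n generalizing c with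
  | zero => simp [valN]
  | succ n ih =>
    have h3 : (c 0 : ℕ) ≤ 3 := by omega
    have := ih (tailSeq c)
    have : valN (n+1) c + 1 ≤ 3 * 4^n + 4^n := by
      simp only [valN]
      nlinarith
    calc valN (n+1) c + 1 ≤ 3 * 4^n + 4^n := this
      _ = 4^(n+1) := by ring

/-- The central set identity: prefix-digit event is a 4-adic interval. -/
lemma digit_set_eq (n : ℕ) (c : ℕ → Fin 4) :
    {z : ℝ | z ∈ Set.Ico (0:ℝ) 1 ∧ ∀ k < n, dig k z = c k}
      = Set.Ico ((valN n c : ℝ)/4^n) ((valN n c + 1 : ℝ)/4^n) := by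
  induction n generalizing c with
  | zero =>
    ext z
    simp [valN, Set.mem_Ico]
  | succ n ih =>
    ext z
    simp only [Set.mem_setOf_eq, Set.mem_Ico]
    constructor
    · rintro ⟨⟨hz0, hz1⟩, hd⟩
      have hd0 : dig 0 z = c 0 := hd 0 (Nat.succ_pos n)
      have h0 : digit4 z = c 0 := by simpa [dig] using hd0
      obtain ⟨hl, hr⟩ := (digit4_eq_iff hz0 hz1 (c 0)).mp h0
      have hT : T z = 4*z - ((c 0 : ℕ):ℝ) := T_eq (c 0) hl hr
      have hTmem : T z ∈ Set.Ico (0:ℝ) 1 ∧ ∀ k < n, dig k (T z) = tailSeq c k := by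
        constructor
        · rw [hT]; constructor
          · nlinarith [hl]
          · nlinarith [hr]
        · intro k hk
          have := hd (k+1) (by omega)
          simpa [dig, tailSeq, Function.iterate_succ_apply] using this
      have hmem : T z ∈ Set.Ico ((valN n (tailSeq c) : ℝ)/4^n) ((valN n (tailSeq c) + 1 : ℝ)/4^n) := by
        rw [← ih (tailSeq c)]; exact hTmem
      obtain ⟨hml, hmr⟩ := hmem
      rw [hT] at hml hmr
      have h4n : (0:ℝ) < 4^n := by positivity
      constructor
      · simp only [valN]
        push_cast
        rw [div_le_iff₀ (by positivity)]
        rw [div_le_iff₀ h4n] at hml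
        have hring : (4*z - ((c 0:ℕ):ℝ))*4^n = z*4^(n+1) - ((c 0:ℕ):ℝ)*4^n := by ring
        linarith
      · simp only [valN]
        push_cast
        rw [lt_div_iff₀ (by positivity)]
        rw [lt_div_iff₀ h4n] at hmr
        have hring : (4*z - ((c 0:ℕ):ℝ))*4^n = z*4^(n+1) - ((c 0:ℕ):ℝ)*4^n := by ring
        linarith
    · rintro ⟨hl, hr⟩
      have h4n : (0:ℝ) < 4^n := by positivity
      have hvt := valN_lt n (tailSeq c)
      have hc3 : ((c 0 : ℕ):ℝ) ≤ 3 := by exact_mod_cast (by omega : (c 0 : ℕ) ≤ 3)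
      simp only [valN] at hl hr
      push_cast at hl hr
      rw [div_le_iff₀ (by positivity)] at hl
      rw [lt_div_iff₀ (by positivity)] at hr
      -- T z = 4 z - c 0 lands in the tail interval
      have hring : (4*z - ((c 0:ℕ):ℝ))*4^n = z*4^(n+1) - ((c 0:ℕ):ℝ)*4^n := by ring
      have hTl : ((valN n (tailSeq c) : ℝ))/4^n ≤ 4*z - ((c 0:ℕ):ℝ) := by
        rw [div_le_iff₀ h4n]; linarith
      have hTr : 4*z - ((c 0:ℕ):ℝ) < ((valN n (tailSeq c) : ℝ) + 1)/4^n := by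
        rw [lt_div_iff₀ h4n]; linarith
      have hT01 : 0 ≤ 4*z - ((c 0:ℕ):ℝ) ∧ 4*z - ((c 0:ℕ):ℝ) < 1 := by
        have hvt' : ((valN n (tailSeq c) : ℝ)) + 1 ≤ 4^n := by exact_mod_cast hvt
        constructor
        · have : (0:ℝ) ≤ (valN n (tailSeq c) : ℝ)/4^n := by positivity
          linarith
        · have : ((valN n (tailSeq c) : ℝ) + 1)/4^n ≤ 1 := by
            rw [div_le_one h4n]; linarith
          linarith
      have hz01 : 0 ≤ z ∧ z < 1 := by
        constructor
        · nlinarith [hT01.1, (by exact_mod_cast Nat.zero_le (c 0 : ℕ) : (0:ℝ) ≤ ((c 0:ℕ):ℝ))]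
        · nlinarith [hT01.2, hc3]
      have hdig0 : digit4 z = c 0 := by
        rw [digit4_eq_iff hz01.1 hz01.2]
        constructor
        · rw [div_le_iff₀ (by norm_num : (0:ℝ)<4)]; nlinarith [hT01.1]
        · rw [lt_div_iff₀ (by norm_num : (0:ℝ)<4)]; nlinarith [hT01.2]
      have hTz : T z = 4*z - ((c 0:ℕ):ℝ) := by
        apply T_eq (c 0)
        · rw [div_le_iff₀ (by norm_num : (0:ℝ)<4)]; nlinarith [hT01.1]
        · rw [lt_div_iff₀ (by norm_num : (0:ℝ)<4)]; nlinarith [hT01.2]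
      have hTail : T z ∈ {w : ℝ | w ∈ Set.Ico (0:ℝ) 1 ∧ ∀ k < n, dig k w = tailSeq c k} := by
        rw [ih (tailSeq c)]
        rw [hTz]
        exact Set.mem_Ico.mpr ⟨hTl, by push_cast; exact hTr⟩
      refine ⟨⟨hz01.1, hz01.2⟩, ?_⟩
      intro k hk
      cases k with
      | zero => simpa [dig] using hdig0
      | succ k =>
        have := hTail.2 k (by omega)
        simpa [dig, tailSeq, Function.iterate_succ_apply] using this



abbrev Seq := ℕ → Fin 4

def cylN (n : ℕ) (c : Seq) : Set Seq := {f | ∀ k < n, f k = c k}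

/-- extension of a finite prefix by zeros -/
def exd {n : ℕ} (p : Fin n → Fin 4) : Seq := fun k => if h : k < n then p ⟨k, h⟩ else 0

def psetF (n : ℕ) (Q : Finset (Fin n → Fin 4)) : Set Seq :=
  {f | (fun k : Fin n => f (k : ℕ)) ∈ Q}

lemma measurableSet_psetF (n : ℕ) (Q : Finset (Fin n → Fin 4)) :
    MeasurableSet (psetF n Q) := by
  have : psetF n Q = (fun f : Seq => fun k : Fin n => f (k : ℕ)) ⁻¹' (Q : Set (Fin n → Fin 4)) := rfl
  rw [this]
  exact (measurable_pi_lambda _ fun k => measurable_pi_apply _) ((Q : Set (Fin n → Fin 4)).to_countable.measurableSet)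

lemma psetF_singleton (n : ℕ) (q : Fin n → Fin 4) :
    psetF n {q} = cylN n (exd q) := by
  ext f
  simp only [psetF, cylN, Set.mem_setOf_eq, Finset.mem_singleton]
  constructor
  · intro h k hk
    have : f k = q ⟨k, hk⟩ := by rw [← h]
    simp [exd, hk, this]
  · intro h
    funext k
    have := h k k.isLt
    simpa [exd, k.isLt] using this

lemma cylN_measurableSet (n : ℕ) (c : Seq) : MeasurableSet (cylN n c) := by
  have : cylN n c = ⋂ k ∈ Finset.range n, (fun f : Seq => f k) ⁻¹' {c k} := by
    ext f; simp [cylN]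
  rw [this]
  exact Finset.measurableSet_biInter _ fun k _ => (measurable_pi_apply k) (measurableSet_singleton _)

lemma psetF_zero_univ : psetF 0 (Finset.univ : Finset (Fin 0 → Fin 4)) = Set.univ := by
  ext f
  simp only [psetF, Set.mem_setOf_eq, Set.mem_univ, iff_true, Finset.mem_univ]


section abstractMeasure

variable {μ : Measure Seq} (hμ : ∀ n c, μ (cylN n c) = ((4:ℝ≥0∞)^n)⁻¹)

include hμ

lemma mu_univ : μ Set.univ = 1 := by
  have := hμ 0 (fun _ => 0)
  simpa [cylN] using this

lemma mu_psetF (n : ℕ) (Q : Finset (Fin n → Fin 4)) :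
    μ (psetF n Q) = Q.card * ((4:ℝ≥0∞)^n)⁻¹ := by
  classical
  have hdecomp : psetF n Q = ⋃ q ∈ Q, psetF n {q} := by
    ext f; simp [psetF]
  rw [hdecomp, measure_biUnion_finset]
  · rw [Finset.sum_congr rfl (fun q _ => by rw [psetF_singleton, hμ])]
    simp [Finset.sum_const, nsmul_eq_mul]
  · intro q hq q' hq' hne
    simp only [Function.onFun]
    rw [Set.disjoint_left]
    intro f hf hf'
    simp only [psetF, Set.mem_setOf_eq, Finset.mem_singleton] at hf hf'
    exact hne (hf ▸ hf')
  · intro q _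
    exact measurableSet_psetF n {q}

end abstractMeasure

/-- every finite measure is determined by its values on prefix sets -/
lemma ext_prefix {μ ν : Measure Seq}
    (hfin : IsFiniteMeasure μ)
    (hν : ∀ n (Q : Finset (Fin n → Fin 4)), ν (psetF n Q) = μ (psetF n Q)) : ν = μ := by
  classical
  have hgen : (inferInstance : MeasurableSpace Seq) = MeasurableSpace.generateFrom
      (measurableCylinders (fun _ : ℕ => Fin 4)) := generateFrom_measurableCylinders.symm
  have hνfin : IsFiniteMeasure ν := by
    constructor
    have : ν Set.univ = μ Set.univ := by
      have h0 := hν 0 Finset.univ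
      rwa [psetF_zero_univ] at h0
    rw [this]; exact measure_lt_top μ _
  refine MeasureTheory.ext_of_generate_finite _ hgen isPiSystem_measurableCylinders ?_ ?_
  · intro s hs
    obtain ⟨I, S, hS, rfl⟩ := (mem_measurableCylinders _).mp hs
    -- express the cylinder as a psetF
    set n := (I.sup id) + 1 with hn
    have hkn : ∀ i ∈ I, i < n := fun i hi => Nat.lt_succ_of_le (Finset.le_sup (f := id) hi)
    set Q : Finset (Fin n → Fin 4) :=
      Finset.univ.filter (fun p => (fun i : I => p ⟨(i : ℕ), hkn i i.2⟩) ∈ S) with hQ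
    have hcyl : cylinder I S = psetF n Q := by
      ext f
      simp only [mem_cylinder, psetF, Set.mem_setOf_eq, hQ, Finset.mem_filter, Finset.mem_univ,
        true_and]
      rfl
    rw [hcyl, hν]
  · have := hν 0 Finset.univ
    rwa [psetF_zero_univ] at this


def shiftN (n : ℕ) (f : Seq) : Seq := fun k => f (n + k)

lemma measurable_shiftN (n : ℕ) : Measurable (shiftN n) :=
  measurable_pi_lambda _ fun k => measurable_pi_apply (n + k)

lemma disjoint_psetF_singleton {n : ℕ} {q q' : Fin n → Fin 4} (hne : q ≠ q') :
    Disjoint (psetF n {q}) (psetF n {q'}) := by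
  rw [Set.disjoint_left]
  intro f hf hf'
  simp only [psetF, Set.mem_setOf_eq, Finset.mem_singleton] at hf hf'
  exact hne (hf ▸ hf')

section abstractMeasure2

variable {μ : Measure Seq} (hμ : ∀ n c, μ (cylN n c) = ((4:ℝ≥0∞)^n)⁻¹)

include hμ

lemma ind_singleton (n : ℕ) (q : Fin n → Fin 4) {S : Set Seq} (hS : MeasurableSet S) :
    μ (psetF n {q} ∩ shiftN n ⁻¹' S) = ((4:ℝ≥0∞)^n)⁻¹ * μ S := by
  classical
  haveI : IsProbabilityMeasure μ := ⟨mu_univ hμ⟩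
  set κ₁ : Measure Seq := (μ.restrict (psetF n {q})).map (shiftN n) with hκ₁
  set κ₂ : Measure Seq := ((4:ℝ≥0∞)^n)⁻¹ • μ with hκ₂
  have key : ∀ (m : ℕ) (Q' : Finset (Fin m → Fin 4)),
      κ₁ (psetF m Q') = κ₂ (psetF m Q') := by
    intro m Q'
    have h1 : κ₁ (psetF m Q') = μ (shiftN n ⁻¹' psetF m Q' ∩ psetF n {q}) := by
      rw [hκ₁, Measure.map_apply (measurable_shiftN n) (measurableSet_psetF m Q'),
        Measure.restrict_apply (measurable_shiftN n (measurableSet_psetF m Q'))]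
    set Q'' : Finset (Fin (n+m) → Fin 4) :=
      Finset.univ.filter (fun p => (fun k : Fin n => p (Fin.castAdd m k)) = q ∧
        (fun k : Fin m => p (Fin.natAdd n k)) ∈ Q') with hQ''
    have hset : shiftN n ⁻¹' psetF m Q' ∩ psetF n {q} = psetF (n+m) Q'' := by
      ext f
      simp only [Set.mem_inter_iff, Set.mem_preimage, psetF, Set.mem_setOf_eq,
        Finset.mem_singleton, hQ'', Finset.mem_filter, Finset.mem_univ, true_and,
        Fin.coe_castAdd, Fin.coe_natAdd, shiftN]
      tauto
    have hcard : Q''.card = Q'.card := by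
      apply Finset.card_bij' (fun p _ => (fun k : Fin m => p (Fin.natAdd n k)))
        (fun r _ => Fin.append q r)
      · intro p hp
        simp only [hQ'', Finset.mem_filter] at hp
        exact hp.2.2
      · intro r hr
        simp only [hQ'', Finset.mem_filter, Finset.mem_univ, true_and]
        constructor
        · funext k; exact Fin.append_left q r k
        · have : (fun k : Fin m => Fin.append q r (Fin.natAdd n k)) = r := by
            funext k; exact Fin.append_right q r k
          rwa [this]
      · intro p hp
        simp only [hQ'', Finset.mem_filter, Finset.mem_univ, true_and] at hp
        funext j
        refine Fin.addCases (fun k => ?_) (fun k => ?_) j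
        · rw [Fin.append_left]
          exact (congrFun hp.1 k).symm
        · rw [Fin.append_right]
      · intro r hr
        funext k
        rw [Fin.append_right]
    have h2 : μ (psetF (n+m) Q'') = Q'.card * ((4:ℝ≥0∞)^(n+m))⁻¹ := by
      rw [mu_psetF hμ, hcard]
    have h3 : κ₂ (psetF m Q') = ((4:ℝ≥0∞)^n)⁻¹ * (Q'.card * ((4:ℝ≥0∞)^m)⁻¹) := by
      rw [hκ₂, Measure.smul_apply, smul_eq_mul, mu_psetF hμ]
    rw [h1, hset, h2, h3, pow_add, ENNReal.mul_inv (by simp) (by simp)]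
    ring
  have hκeq : κ₁ = κ₂ := by
    have h2 : IsFiniteMeasure κ₂ := by
      constructor
      rw [hκ₂]
      simp only [Measure.smul_apply, smul_eq_mul]
      exact ENNReal.mul_lt_top (ENNReal.inv_lt_top.mpr (ENNReal.pow_pos (by norm_num) n))
        (measure_lt_top μ _)
    exact ext_prefix h2 (fun m Q' => key m Q')
  have := congrArg (fun ρ : Measure Seq => ρ S) hκeq
  simp only [hκ₁, hκ₂, Measure.smul_apply, smul_eq_mul] at this
  rw [Measure.map_apply (measurable_shiftN n) hS,
    Measure.restrict_apply (measurable_shiftN n hS)] at this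
  rw [Set.inter_comm]
  exact this

lemma ind (n : ℕ) (Q : Finset (Fin n → Fin 4)) {S : Set Seq} (hS : MeasurableSet S) :
    μ (psetF n Q ∩ shiftN n ⁻¹' S) = μ (psetF n Q) * μ S := by
  classical
  have hdecomp : psetF n Q ∩ shiftN n ⁻¹' S = ⋃ q ∈ Q, (psetF n {q} ∩ shiftN n ⁻¹' S) := by
    ext f; simp [psetF]
  rw [hdecomp, measure_biUnion_finset, mu_psetF hμ]
  · rw [Finset.sum_congr rfl (fun q _ => ind_singleton hμ n q hS)]
    rw [Finset.sum_const, nsmul_eq_mul]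
    ring
  · intro q hq q' hq' hne
    exact (disjoint_psetF_singleton hne).mono Set.inter_subset_left Set.inter_subset_left
  · intro q _
    exact (measurableSet_psetF n {q}).inter (measurable_shiftN n hS)

lemma shift_inv (n : ℕ) {S : Set Seq} (hS : MeasurableSet S) :
    μ (shiftN n ⁻¹' S) = μ S := by
  have huniv : psetF n (Finset.univ : Finset (Fin n → Fin 4)) = Set.univ := by
    ext f; simp [psetF]
  have := ind hμ n Finset.univ hS
  rw [huniv, Set.univ_inter, mu_univ hμ] at this
  · rw [this, one_mul]

end abstractMeasure2

/-! ### The walk and its return structure -/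

def SW : ℕ → Seq → ℤ × ℤ
  | 0, _ => (0, 0)
  | n+1, f => SW n f + dirG (f n)

lemma SW_congr {n : ℕ} {f g : Seq} (h : ∀ k < n, f k = g k) :
    ∀ m ≤ n, SW m f = SW m g := by
  intro m hm
  induction m with
  | zero => rfl
  | succ m ih =>
    have h1 : SW m f = SW m g := ih (by omega)
    have h2 : f m = g m := h m (by omega)
    simp [SW, h1, h2]

lemma SW_exd {n : ℕ} (f : Seq) : SW n f = SW n (exd (fun k : Fin n => f (k : ℕ))) := by
  refine SW_congr (fun k hk => ?_) n le_rfl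
  simp [exd, hk]

lemma measurable_SW (n : ℕ) : Measurable (SW n) := by
  have heq : SW n = (fun p : Fin n → Fin 4 => SW n (exd p)) ∘ (fun f (k : Fin n) => f (k : ℕ)) :=
    funext fun f => SW_exd f
  rw [heq]
  exact (measurable_of_countable _).comp (measurable_pi_lambda _ fun k => measurable_pi_apply _)

lemma SW_shift (n : ℕ) (f : Seq) : ∀ m, SW m (shiftN n f) = SW (n+m) f - SW n f := by
  intro m
  induction m with
  | zero => simp [SW]
  | succ m ih =>
    have : shiftN n f m = f (n+m) := rfl
    show SW m (shiftN n f) + dirG (shiftN n f m) = SW (n+(m+1)) f - SW n f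
    rw [ih, this]
    show _ = SW (n+m) f + dirG (f (n+m)) - SW n f
    abel

def cnt (n : ℕ) (f : Seq) : ℕ := ((Finset.Icc 1 n).filter (fun j => SW j f = 0)).card

lemma cnt_zero (f : Seq) : cnt 0 f = 0 := by simp [cnt]

lemma cnt_succ (n : ℕ) (f : Seq) :
    cnt (n+1) f = cnt n f + (if SW (n+1) f = 0 then 1 else 0) := by
  classical
  have hIcc : Finset.Icc 1 (n+1) = insert (n+1) (Finset.Icc 1 n) := by
    ext j; simp [Finset.mem_Icc, Finset.mem_insert]; omega
  have hnot : (n+1) ∉ Finset.Icc 1 n := by simp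
  rw [cnt, hIcc, Finset.filter_insert]
  by_cases h : SW (n+1) f = 0
  · rw [if_pos h, Finset.card_insert_of_notMem (fun hc => hnot (Finset.mem_of_mem_filter _ hc))]
    simp [cnt, h]
  · rw [if_neg h]
    simp [cnt, h]

lemma cnt_mono {n m : ℕ} (h : n ≤ m) (f : Seq) : cnt n f ≤ cnt m f := by
  apply Finset.card_le_card
  apply Finset.filter_subset_filter
  exact Finset.Icc_subset_Icc_right h

lemma cnt_le (n : ℕ) (f : Seq) : cnt n f ≤ n := by
  calc cnt n f ≤ (Finset.Icc 1 n).card := Finset.card_filter_le _ _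
    _ = n := by simp

lemma cnt_congr {n : ℕ} {f g : Seq} (h : ∀ k < n, f k = g k) : cnt n f = cnt n g := by
  unfold cnt
  congr 1
  apply Finset.filter_congr
  intro j hj
  rw [Finset.mem_Icc] at hj
  rw [SW_congr h j hj.2]

def ZS (n : ℕ) : Set Seq := {f | SW n f = 0}

def Ret : Set Seq := {f | ∃ n, SW (n+1) f = 0}

def Nk (k : ℕ) : Set Seq := {f | ∃ n, k ≤ cnt n f}

def Fk (k m : ℕ) : Set Seq := {f | SW m f = 0 ∧ cnt m f = k}

lemma measurableSet_ZS (n : ℕ) : MeasurableSet (ZS n) :=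
  measurable_SW n (measurableSet_singleton (0,0))

lemma measurableSet_Ret : MeasurableSet Ret := by
  have : Ret = ⋃ n, ZS (n+1) := by ext f; simp [Ret, ZS]
  rw [this]
  exact MeasurableSet.iUnion fun n => measurableSet_ZS (n+1)

lemma measurable_cnt (n : ℕ) : Measurable (cnt n) := by
  have heq : cnt n = (fun p : Fin n → Fin 4 => cnt n (exd p)) ∘ (fun f (k : Fin n) => f (k : ℕ)) := by
    funext f
    exact cnt_congr (fun k hk => by simp [exd, hk])
  rw [heq]
  exact (measurable_of_countable _).comp (measurable_pi_lambda _ fun k => measurable_pi_apply _)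

lemma measurableSet_Nk (k : ℕ) : MeasurableSet (Nk k) := by
  have : Nk k = ⋃ n, (cnt n) ⁻¹' (Set.Ici k) := by ext f; simp [Nk]
  rw [this]
  exact MeasurableSet.iUnion fun n => measurable_cnt n (measurableSet_Ici)

lemma measurableSet_Fk (k m : ℕ) : MeasurableSet (Fk k m) :=
  (measurableSet_ZS m).inter ((measurable_cnt m) (measurableSet_singleton k))

open Classical in
noncomputable def Qfk (k m : ℕ) : Finset (Fin m → Fin 4) :=
  Finset.univ.filter (fun p => SW m (exd p) = 0 ∧ cnt m (exd p) = k)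

lemma Fk_eq_psetF (k m : ℕ) : Fk k m = psetF m (Qfk k m) := by
  classical
  ext f
  have hagree : ∀ k' < m, f k' = exd (fun k : Fin m => f (k : ℕ)) k' := by
    intro k' hk'; simp [exd, hk']
  have h1 : SW m f = SW m (exd (fun k : Fin m => f (k : ℕ))) := SW_congr hagree m le_rfl
  have h2 : cnt m f = cnt m (exd (fun k : Fin m => f (k : ℕ))) := cnt_congr hagree
  simp only [Fk, psetF, Set.mem_setOf_eq, Qfk, Finset.mem_filter, Finset.mem_univ, true_and]
  rw [h1, h2]

lemma Nk_one : Nk 1 = Ret := by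
  ext f
  simp only [Nk, Ret, Set.mem_setOf_eq]
  constructor
  · rintro ⟨n, hn⟩
    have : ((Finset.Icc 1 n).filter (fun j => SW j f = 0)).Nonempty := by
      rw [← Finset.card_pos]; exact hn
    obtain ⟨j, hj⟩ := this
    rw [Finset.mem_filter, Finset.mem_Icc] at hj
    obtain ⟨⟨hj1, _⟩, hj0⟩ := hj
    obtain ⟨i, rfl⟩ := Nat.exists_eq_add_of_le hj1
    exact ⟨i, by rw [show i + 1 = 1 + i by omega]; exact hj0⟩
  · rintro ⟨n, hn⟩
    refine ⟨n+1, ?_⟩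
    have : (n+1) ∈ (Finset.Icc 1 (n+1)).filter (fun j => SW j f = 0) := by
      rw [Finset.mem_filter, Finset.mem_Icc]
      exact ⟨⟨by omega, le_rfl⟩, hn⟩
    calc 1 ≤ ({n+1} : Finset ℕ).card := by simp
      _ ≤ _ := Finset.card_le_card (by simpa using this)

lemma Nk_subset {k k' : ℕ} (h : k' ≤ k) : Nk k ⊆ Nk k' := by
  rintro f ⟨n, hn⟩
  exact ⟨n, le_trans h hn⟩

lemma Nk_eq_iUnion_Fk {k : ℕ} (hk : 1 ≤ k) : Nk k = ⋃ m, Fk k m := by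
  classical
  ext f
  simp only [Nk, Set.mem_setOf_eq, Set.mem_iUnion]
  constructor
  · intro h
    let m := Nat.find h
    have hfind : k ≤ cnt m f := Nat.find_spec h
    rcases Nat.eq_zero_or_pos m with hm0 | hmpos
    · exfalso
      rw [hm0, cnt_zero] at hfind
      omega
    · obtain ⟨m', hm'⟩ : ∃ m', m = m' + 1 := ⟨m - 1, by omega⟩
      have hfind' : k ≤ cnt (m'+1) f := hm' ▸ hfind
      have hmin : ¬ k ≤ cnt m' f := Nat.find_min h (by omega)
      have hsucc := cnt_succ m' f
      by_cases h0 : SW (m'+1) f = 0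
      · refine ⟨m'+1, h0, ?_⟩
        rw [if_pos h0] at hsucc
        show cnt (m'+1) f = k
        omega
      · exfalso
        rw [if_neg h0] at hsucc
        omega

  · rintro ⟨m, _, hcnt⟩
    exact ⟨m, le_of_eq hcnt.symm⟩

lemma Fk_disjoint {k : ℕ} (hk : 1 ≤ k) : Pairwise (Function.onFun Disjoint (Fk k)) := by
  have key : ∀ m m', m < m' → ∀ f, f ∈ Fk k m → f ∈ Fk k m' → False := by
    rintro m m' hlt f ⟨h0, hc⟩ ⟨h0', hc'⟩
    obtain ⟨t, rfl⟩ : ∃ t, m' = t + 1 := ⟨m' - 1, by omega⟩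
    have h1 : cnt m f ≤ cnt t f := cnt_mono (by omega) f
    have h2 := cnt_succ t f
    rw [if_pos h0'] at h2
    omega
  intro m m' hne
  have : Disjoint (Fk k m) (Fk k m') := by
    rcases lt_or_gt_of_ne hne with h | h
    · rw [Set.disjoint_left]; exact fun {f} hf hf' => (key m m' h f hf hf').elim
    · rw [Set.disjoint_left]; exact fun {f} hf hf' => (key m' m h f hf' hf).elim
  exact this

lemma Nk_inter_Fk {k : ℕ} (hk : 1 ≤ k) (m : ℕ) :
    Nk (k+1) ∩ Fk k m = Fk k m ∩ shiftN m ⁻¹' Ret := by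
  ext f
  simp only [Set.mem_inter_iff, Set.mem_preimage]
  constructor
  · rintro ⟨⟨n, hn⟩, hFk⟩
    refine ⟨hFk, ?_⟩
    obtain ⟨h0, hc⟩ := hFk
    -- there is a return after time m
    have hex : ∃ j, m < j ∧ SW j f = 0 := by
      by_contra hcon
      push_neg at hcon
      have hstay : ∀ t, cnt (m + t) f = k := by
        intro t
        induction t with
        | zero => simpa using hc
        | succ t ih =>
          have := cnt_succ (m + t) f
          rw [if_neg (hcon (m+t+1) (by omega))] at this
          rw [show m + (t+1) = (m+t)+1 from rfl, this, ih]
          omega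
      have hle : cnt n f ≤ k := by
        rcases le_total n m with h | h
        · calc cnt n f ≤ cnt m f := cnt_mono h f
            _ = k := hc
        · obtain ⟨t, rfl⟩ := Nat.exists_eq_add_of_le h
          exact le_of_eq (hstay t)
      omega
    obtain ⟨j, hj, hj0⟩ := hex
    obtain ⟨i, rfl⟩ : ∃ i, j = m + (i+1) := ⟨j - m - 1, by omega⟩
    refine ⟨i, ?_⟩
    rw [SW_shift, hj0, h0, sub_zero]
  · rintro ⟨hFk, ⟨i, hi⟩⟩
    refine ⟨?_, hFk⟩
    obtain ⟨h0, hc⟩ := hFk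
    rw [SW_shift, h0, sub_zero] at hi
    refine ⟨m + (i+1), ?_⟩
    have h1 : cnt (m + i + 1) f = cnt (m+i) f + 1 := by
      have := cnt_succ (m+i) f
      rwa [if_pos (by rw [show m+i+1 = m+(i+1) from rfl]; exact hi)] at this
    have h2 : cnt m f ≤ cnt (m+i) f := cnt_mono (by omega) f
    rw [show m + (i+1) = m+i+1 from rfl]
    omega

lemma sum_shift (g : ℕ → ℝ≥0∞) (n : ℕ) :
    ∑ j ∈ Finset.range n, g (j+1) = ∑ k ∈ Finset.Icc 1 n, g k := by
  apply Finset.sum_nbij' (i := fun j => j + 1) (j := fun k => k - 1)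
  · intro a ha; rw [Finset.mem_range] at ha; rw [Finset.mem_Icc]; omega
  · intro a ha; rw [Finset.mem_Icc] at ha; rw [Finset.mem_range]; omega
  · intro a ha; omega
  · intro a ha; rw [Finset.mem_Icc] at ha; omega
  · intro a ha; rfl

section renewal

variable {μ : Measure Seq} (hμ : ∀ n c, μ (cylN n c) = ((4:ℝ≥0∞)^n)⁻¹)

include hμ

lemma mu_Nk_succ {k : ℕ} (hk : 1 ≤ k) : μ (Nk (k+1)) = μ (Nk k) * μ Ret := by
  have hdec : Nk (k+1) = ⋃ m, (Fk k m ∩ shiftN m ⁻¹' Ret) := by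
    have h1 : Nk (k+1) = ⋃ m, (Nk (k+1) ∩ Fk k m) := by
      ext f
      simp only [Set.mem_iUnion, Set.mem_inter_iff]
      constructor
      · intro hf
        have hf' : f ∈ Nk k := Nk_subset (by omega) hf
        rw [Nk_eq_iUnion_Fk hk] at hf'
        obtain ⟨m, hm⟩ := Set.mem_iUnion.mp hf'
        exact ⟨m, hf, hm⟩
      · rintro ⟨m, hm, _⟩; exact hm
    rw [h1]
    exact Set.iUnion_congr (fun m => Nk_inter_Fk hk m)
  rw [hdec, measure_iUnion]
  · have hterm : ∀ m, μ (Fk k m ∩ shiftN m ⁻¹' Ret) = μ (Fk k m) * μ Ret := by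
      intro m
      rw [Fk_eq_psetF]
      exact ind hμ m _ measurableSet_Ret
    rw [tsum_congr hterm, ENNReal.tsum_mul_right]
    congr 1
    rw [Nk_eq_iUnion_Fk hk, measure_iUnion (Fk_disjoint hk) (fun m => measurableSet_Fk k m)]
  · intro m m' hne
    exact ((Fk_disjoint hk) hne).mono Set.inter_subset_left Set.inter_subset_left
  · intro m
    exact (measurableSet_Fk k m).inter (measurable_shiftN m measurableSet_Ret)

lemma mu_Nk {k : ℕ} (hk : 1 ≤ k) : μ (Nk k) = (μ Ret)^k := by
  induction k with
  | zero => omega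
  | succ k ih =>
    rcases Nat.eq_zero_or_pos k with rfl | hkpos
    · rw [Nk_one, pow_one]
    · rw [mu_Nk_succ hμ hkpos, ih hkpos, pow_succ]

lemma lint_cnt (n : ℕ) :
    ∫⁻ f, (cnt n f : ℝ≥0∞) ∂μ = ∑ j ∈ Finset.Icc 1 n, μ (ZS j) := by
  have hpt : ∀ f, (cnt n f : ℝ≥0∞) = ∑ j ∈ Finset.Icc 1 n, (ZS j).indicator (fun _ => 1) f := by
    intro f
    rw [cnt, Finset.card_filter]
    push_cast
    apply Finset.sum_congr rfl
    intro j _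
    classical
    by_cases h : SW j f = 0
    · simp [Set.indicator_apply, ZS, h]
    · simp [Set.indicator_apply, ZS, h]
  calc ∫⁻ f, (cnt n f : ℝ≥0∞) ∂μ
      = ∫⁻ f, ∑ j ∈ Finset.Icc 1 n, (ZS j).indicator (fun _ => 1) f ∂μ := by
        apply lintegral_congr; intro f; exact hpt f
    _ = ∑ j ∈ Finset.Icc 1 n, ∫⁻ f, (ZS j).indicator (fun _ => 1) f ∂μ := by
        apply lintegral_finset_sum
        intro j _
        exact (measurable_const.indicator (measurableSet_ZS j))
    _ = ∑ j ∈ Finset.Icc 1 n, μ (ZS j) := by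
        apply Finset.sum_congr rfl
        intro j _
        rw [lintegral_indicator (measurableSet_ZS j)]
        simp

lemma sum_muZS_le (n : ℕ) :
    ∑ j ∈ Finset.Icc 1 n, μ (ZS j) ≤ ∑' k : ℕ, (μ Ret)^(k+1) := by
  have hpt : ∀ f, (cnt n f : ℝ≥0∞)
      = ∑ k ∈ Finset.Icc 1 n, {g : Seq | k ≤ cnt n g}.indicator (fun _ => 1) f := by
    intro f
    classical
    have hcard : cnt n f = ((Finset.Icc 1 n).filter (fun k => k ≤ cnt n f)).card := by
      have : (Finset.Icc 1 n).filter (fun k => k ≤ cnt n f) = Finset.Icc 1 (cnt n f) := by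
        ext k
        simp only [Finset.mem_filter, Finset.mem_Icc]
        have := cnt_le n f
        omega
      rw [this]
      simp
    rw [hcard, Finset.card_filter]
    push_cast
    apply Finset.sum_congr rfl
    intro k _
    classical
    by_cases h : k ≤ cnt n f
    · simp [Set.indicator_apply, Set.mem_setOf_eq, h]
    · simp [Set.indicator_apply, Set.mem_setOf_eq, h]
  have h1 : ∑ j ∈ Finset.Icc 1 n, μ (ZS j) = ∫⁻ f, (cnt n f : ℝ≥0∞) ∂μ := (lint_cnt hμ n).symm
  rw [h1]
  have h2 : ∫⁻ f, (cnt n f : ℝ≥0∞) ∂μ = ∑ k ∈ Finset.Icc 1 n, μ {g : Seq | k ≤ cnt n g} := by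
    calc ∫⁻ f, (cnt n f : ℝ≥0∞) ∂μ
        = ∫⁻ f, ∑ k ∈ Finset.Icc 1 n, {g : Seq | k ≤ cnt n g}.indicator (fun _ => 1) f ∂μ := by
          apply lintegral_congr; intro f; exact hpt f
      _ = ∑ k ∈ Finset.Icc 1 n, ∫⁻ f, {g : Seq | k ≤ cnt n g}.indicator (fun _ => 1) f ∂μ := by
          apply lintegral_finset_sum
          intro k _
          refine measurable_const.indicator ?_
          exact measurable_cnt n measurableSet_Ici
      _ = _ := by
          apply Finset.sum_congr rfl
          intro k _
          rw [lintegral_indicator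
            (show MeasurableSet {g : Seq | k ≤ cnt n g} from measurable_cnt n measurableSet_Ici)]
          simp
  rw [h2]
  have h3 : ∀ k ∈ Finset.Icc 1 n, μ {g : Seq | k ≤ cnt n g} ≤ (μ Ret)^k := by
    intro k hk
    rw [Finset.mem_Icc] at hk
    calc μ {g : Seq | k ≤ cnt n g} ≤ μ (Nk k) := by
          apply measure_mono
          intro f hf
          exact ⟨n, hf⟩
      _ = (μ Ret)^k := mu_Nk hμ hk.1
  calc ∑ k ∈ Finset.Icc 1 n, μ {g : Seq | k ≤ cnt n g}
      ≤ ∑ k ∈ Finset.Icc 1 n, (μ Ret)^k := Finset.sum_le_sum h3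
    _ = ∑ j ∈ Finset.range n, (μ Ret)^(j+1) := (sum_shift (fun k => (μ Ret)^k) n).symm
    _ ≤ ∑' k : ℕ, (μ Ret)^(k+1) := ENNReal.sum_le_tsum _

lemma mu_Ret_eq_one (hdiv : (∑' j : ℕ, μ (ZS (j+1))) = ⊤) : μ Ret = 1 := by
  haveI : IsProbabilityMeasure μ := ⟨mu_univ hμ⟩
  by_contra hne
  have hle : μ Ret ≤ 1 := prob_le_one
  have hlt : μ Ret < 1 := lt_of_le_of_ne hle hne
  have hM : (∑' k : ℕ, (μ Ret)^(k+1)) < ⊤ := by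
    rw [ENNReal.tsum_geometric_add_one]
    apply ENNReal.mul_lt_top (lt_of_lt_of_le hlt le_top)
    rw [ENNReal.inv_lt_top]
    exact tsub_pos_iff_lt.mpr hlt
  have hbound : (∑' j : ℕ, μ (ZS (j+1))) ≤ ∑' k : ℕ, (μ Ret)^(k+1) := by
    rw [ENNReal.tsum_eq_iSup_sum]
    apply iSup_le
    intro s
    rcases s.eq_empty_or_nonempty with rfl | hs
    · simp
    · obtain ⟨n, hn⟩ := s.exists_le
      calc ∑ j ∈ s, μ (ZS (j+1)) ≤ ∑ j ∈ Finset.range (n+1), μ (ZS (j+1)) := by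
            apply Finset.sum_le_sum_of_subset
            intro j hj
            rw [Finset.mem_range]
            exact Nat.lt_succ_of_le (hn j hj)
        _ = ∑ k ∈ Finset.Icc 1 (n+1), μ (ZS k) := sum_shift (fun k => μ (ZS k)) (n+1)
        _ ≤ _ := sum_muZS_le hμ (n+1)
  rw [hdiv] at hbound
  rw [top_le_iff.mp hbound] at hM
  exact absurd hM (lt_irrefl ⊤)

theorem recurrence_ae (hdiv : (∑' j : ℕ, μ (ZS (j+1))) = ⊤) :
    ∀ᵐ f ∂μ, ∃ᶠ n in atTop, SW n f = 0 := by
  haveI : IsProbabilityMeasure μ := ⟨mu_univ hμ⟩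
  have hq := mu_Ret_eq_one hμ hdiv
  have hNk : ∀ k : ℕ, ∀ᵐ f ∂μ, f ∈ Nk (k+1) := by
    intro k
    have h1 : μ (Nk (k+1)) = 1 := by rw [mu_Nk hμ (by omega), hq, one_pow]
    rw [ae_iff]
    have : {f | ¬ f ∈ Nk (k+1)} = (Nk (k+1))ᶜ := rfl
    rw [this, measure_compl (measurableSet_Nk (k+1)) (measure_ne_top μ _), h1]
    simp
  have hall : ∀ᵐ f ∂μ, ∀ k : ℕ, f ∈ Nk (k+1) := ae_all_iff.mpr hNk
  filter_upwards [hall] with f hf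
  rw [frequently_atTop]
  intro m
  obtain ⟨n, hn⟩ := hf m
  set s := (Finset.Icc 1 n).filter (fun j => SW j f = 0) with hs
  have hcard : m + 1 ≤ s.card := hn
  have hex : ∃ j ∈ s, m ≤ j := by
    by_contra hcon
    push_neg at hcon
    have hsub : s ⊆ Finset.range m := by
      intro j hj
      rw [Finset.mem_range]
      exact hcon j hj
    have := Finset.card_le_card hsub
    rw [Finset.card_range] at this
    omega
  obtain ⟨j, hj, hjm⟩ := hex
  rw [hs, Finset.mem_filter] at hj
  exact ⟨j, hjm, hj.2⟩

end renewal

/-! ### Counting: the local lower bound for the walk at the origin -/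

lemma SW_eq_sum (m : ℕ) (f : Seq) : SW m f = ∑ k ∈ Finset.range m, dirG (f k) := by
  induction m with
  | zero => simp [SW]
  | succ m ih => rw [Finset.sum_range_succ, ← ih]; rfl

def uval : Fin 4 → ℤ := ![1, 1, -1, -1]
def vval : Fin 4 → ℤ := ![1, -1, -1, 1]

lemma uval_eq (j : Fin 4) : uval j = (dirG j).1 + (dirG j).2 := by
  fin_cases j <;> decide

lemma vval_eq (j : Fin 4) : vval j = (dirG j).1 - (dirG j).2 := by
  fin_cases j <;> decide

lemma sum_dir_eq_zero_iff {m : ℕ} (p : Fin m → Fin 4) :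
    ∑ k, dirG (p k) = 0 ↔ (∑ k, uval (p k) = 0 ∧ ∑ k, vval (p k) = 0) := by
  have hu : ∑ k, uval (p k) = (∑ k, dirG (p k)).1 + (∑ k, dirG (p k)).2 := by
    rw [Prod.fst_sum, Prod.snd_sum, ← Finset.sum_add_distrib]
    exact Finset.sum_congr rfl fun k _ => uval_eq (p k)
  have hv : ∑ k, vval (p k) = (∑ k, dirG (p k)).1 - (∑ k, dirG (p k)).2 := by
    rw [Prod.fst_sum, Prod.snd_sum, ← Finset.sum_sub_distrib]
    exact Finset.sum_congr rfl fun k _ => vval_eq (p k)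
  constructor
  · intro h
    rw [hu, hv, h]
    simp
  · rintro ⟨h1, h2⟩
    rw [hu] at h1
    rw [hv] at h2
    have e1 : (∑ k, dirG (p k)).1 = 0 := by omega
    have e2 : (∑ k, dirG (p k)).2 = 0 := by omega
    exact Prod.ext e1 e2

def enc : Bool → Bool → Fin 4
  | true, true => 0
  | true, false => 1
  | false, false => 2
  | false, true => 3

lemma uval_enc (a b : Bool) : uval (enc a b) = if a then 1 else -1 := by
  cases a <;> cases b <;> decide

lemma vval_enc (a b : Bool) : vval (enc a b) = if b then 1 else -1 := by
  cases a <;> cases b <;> decide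

lemma enc_inj {a b a' b' : Bool} (h : enc a b = enc a' b') : a = a' ∧ b = b' := by
  cases a <;> cases b <;> cases a' <;> cases b' <;> simp_all [enc]

/-- sum of ±1 determined by the number of `true`s -/
lemma sum_pm {m : ℕ} (A : Fin m → Bool) :
    ∑ k, (if A k then (1:ℤ) else -1)
      = 2 * ((Finset.univ.filter (fun k => A k = true)).card : ℤ) - m := by
  classical
  have hpt : ∀ k, (if A k then (1:ℤ) else -1) = 2 * (if A k = true then (1:ℤ) else 0) - 1 := by
    intro k; by_cases h : A k <;> simp [h]
  rw [Finset.sum_congr rfl (fun k _ => hpt k), Finset.sum_sub_distrib, ← Finset.mul_sum,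
    Finset.sum_boole]
  simp [Finset.card_univ]

/-- number of boolean functions with a given number of `true`s -/
lemma card_bool_count (m j : ℕ) :
    (Finset.univ.filter (fun A : Fin m → Bool => (Finset.univ.filter (fun k => A k = true)).card = j)).card
      = m.choose j := by
  classical
  have h : (Finset.univ.filter (fun A : Fin m → Bool => (Finset.univ.filter (fun k => A k = true)).card = j)).card
      = (Finset.powersetCard j (Finset.univ : Finset (Fin m))).card := by
    apply Finset.card_nbij (i := fun A => Finset.univ.filter (fun k => A k = true))
    · intro A hA
      rw [Finset.mem_coe, Finset.mem_filter] at hA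
      rw [Finset.mem_coe, Finset.mem_powersetCard]
      exact ⟨Finset.filter_subset _ _, hA.2⟩
    · intro A hA A' hA' heq
      funext k
      have := Finset.ext_iff.mp heq k
      simp only [Finset.mem_filter, Finset.mem_univ, true_and] at this
      by_cases hk : A k <;> by_cases hk' : A' k <;> simp_all
    · intro t ht
      rw [Finset.mem_coe, Finset.mem_powersetCard] at ht
      refine ⟨fun k => decide (k ∈ t), ?_, ?_⟩
      · rw [Finset.mem_coe, Finset.mem_filter]
        have hft : Finset.univ.filter (fun k => decide (k ∈ t) = true) = t := by
          ext k; simp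
        rw [hft]
        exact ⟨Finset.mem_univ _, ht.2⟩
      · ext k; simp
  rw [h, Finset.card_powersetCard, Finset.card_univ, Fintype.card_fin]

open Classical in
noncomputable def Qz (m : ℕ) : Finset (Fin m → Fin 4) :=
  Finset.univ.filter (fun p => ∑ k, dirG (p k) = 0)

lemma SW_eq_sum_fin (m : ℕ) (f : Seq) : SW m f = ∑ k : Fin m, dirG (f (k : ℕ)) := by
  rw [SW_eq_sum, ← Fin.sum_univ_eq_sum_range]

lemma ZS_eq_psetF (m : ℕ) : ZS m = psetF m (Qz m) := by
  classical
  ext f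
  simp only [ZS, psetF, Set.mem_setOf_eq, Qz, Finset.mem_filter, Finset.mem_univ, true_and]
  rw [SW_eq_sum_fin]

lemma card_Qz_ge (n : ℕ) : (Nat.centralBinom (n+1))^2 ≤ (Qz (2*(n+1))).card := by
  classical
  set m := 2*(n+1) with hm
  set j := n+1 with hj
  set DBA : Finset (Fin m → Bool) :=
    Finset.univ.filter (fun A : Fin m → Bool => (Finset.univ.filter (fun k => A k = true)).card = j)
    with hDBA
  have hmaps : ∀ AB ∈ DBA ×ˢ DBA,
      (fun k => enc (AB.1 k) (AB.2 k)) ∈ Qz m := by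
    rintro ⟨A, B⟩ hAB
    rw [Finset.mem_product] at hAB
    obtain ⟨hA, hB⟩ := hAB
    rw [hDBA, Finset.mem_filter] at hA hB
    simp only [Qz, Finset.mem_filter, Finset.mem_univ, true_and]
    rw [sum_dir_eq_zero_iff]
    constructor
    · have h1 : ∑ k : Fin m, uval (enc (A k) (B k)) = ∑ k : Fin m, (if A k then (1:ℤ) else -1) :=
        Finset.sum_congr rfl fun k _ => uval_enc (A k) (B k)
      rw [h1, sum_pm A, hA.2]
      have : (m:ℤ) = 2*(j:ℤ) := by rw [hm, hj]; push_cast; ring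
      omega
    · have h1 : ∑ k : Fin m, vval (enc (A k) (B k)) = ∑ k : Fin m, (if B k then (1:ℤ) else -1) :=
        Finset.sum_congr rfl fun k _ => vval_enc (A k) (B k)
      rw [h1, sum_pm B, hB.2]
      have : (m:ℤ) = 2*(j:ℤ) := by rw [hm, hj]; push_cast; ring
      omega
  have hinj : Set.InjOn (fun AB : (Fin m → Bool) × (Fin m → Bool) => fun k => enc (AB.1 k) (AB.2 k))
      (↑(DBA ×ˢ DBA) : Set ((Fin m → Bool) × (Fin m → Bool))) := by
    rintro ⟨A, B⟩ _ ⟨A', B'⟩ _ heq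
    have hk : ∀ k, enc (A k) (B k) = enc (A' k) (B' k) := fun k => congrFun heq k
    have : (∀ k, A k = A' k) ∧ (∀ k, B k = B' k) := by
      constructor
      · intro k; exact (enc_inj (hk k)).1
      · intro k; exact (enc_inj (hk k)).2
    ext <;> simp_all
  have hle := Finset.card_le_card_of_injOn _ hmaps hinj
  rw [Finset.card_product, hDBA, card_bool_count] at hle
  have hcb : m.choose j = Nat.centralBinom (n+1) := by
    rw [hm, hj, Nat.centralBinom]
  rw [hcb] at hle
  calc (Nat.centralBinom (n+1))^2 = Nat.centralBinom (n+1) * Nat.centralBinom (n+1) := sq _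
    _ ≤ _ := hle

lemma sixteen_le (n : ℕ) : 16^(n+1) ≤ 4*(n+1) * (Nat.centralBinom (n+1))^2 := by
  induction n with
  | zero => decide
  | succ n ih =>
    set c := Nat.centralBinom (n+1) with hc
    have hkey : (n+2) * Nat.centralBinom (n+2) = 2*(2*(n+1)+1) * c :=
      Nat.succ_mul_centralBinom_succ (n+1)
    have hmul : (n+2) * (16^(n+2)) ≤ (n+2) * (4*(n+2)*(Nat.centralBinom (n+2))^2) := by
      have h2 : (n+2) * (4*(n+2)*(Nat.centralBinom (n+2))^2)
          = 4 * ((n+2)*Nat.centralBinom (n+2))^2 := by ring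
      rw [h2, hkey]
      have hstep : 4*(n+1)*(n+2) ≤ (2*(n+1)+1)^2 := by nlinarith
      calc (n+2)*(16^(n+2)) = 16*((n+2) * 16^(n+1)) := by ring
        _ ≤ 16*((n+2) * (4*(n+1)*c^2)) :=
            Nat.mul_le_mul_left _ (Nat.mul_le_mul_left _ ih)
        _ = (4*(n+1)*(n+2)) * (16 * c^2) := by ring
        _ ≤ ((2*(n+1)+1)^2) * (16 * c^2) := Nat.mul_le_mul_right _ hstep
        _ = 4 * (2*(2*(n+1)+1) * c)^2 := by ring
    exact Nat.le_of_mul_le_mul_left hmul (by omega)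

lemma tsum_harm : (∑' n : ℕ, ((4:ℝ≥0∞)*((n:ℝ≥0∞)+1))⁻¹) = ⊤ := by
  by_contra h
  have hcoe : ∀ n:ℕ, ((4:ℝ≥0∞)*((n:ℝ≥0∞)+1))⁻¹ = (((4*((n:ℝ≥0)+1))⁻¹ : ℝ≥0) : ℝ≥0∞) := by
    intro n
    rw [ENNReal.coe_inv (by positivity)]
    congr 1
  rw [tsum_congr hcoe] at h
  have hsum : Summable (fun n:ℕ => ((4*((n:ℝ≥0)+1))⁻¹ : ℝ≥0)) :=
    ENNReal.tsum_coe_ne_top_iff_summable.mp h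
  have hsumR : Summable (fun n:ℕ => ((4*((n:ℝ)+1))⁻¹ : ℝ)) := by
    have h1 := NNReal.summable_coe.mpr hsum
    apply h1.congr
    intro n
    push_cast
    ring
  have h14 : Summable (fun n:ℕ => ((n:ℝ)+1)⁻¹) := by
    have h4 := hsumR.mul_left 4
    apply h4.congr
    intro n
    have hpos : (0:ℝ) < (n:ℝ)+1 := by positivity
    field_simp
  have hfin : Summable (fun n:ℕ => 1/((n:ℝ))) := by
    rw [← summable_nat_add_iff 1]
    apply h14.congr
    intro n
    push_cast
    rw [one_div]
  exact Real.not_summable_one_div_natCast hfin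

section diverge

variable {μ : Measure Seq} (hμ : ∀ n c, μ (cylN n c) = ((4:ℝ≥0∞)^n)⁻¹)

include hμ

lemma mu_ZS_even (n : ℕ) : ((4:ℝ≥0∞)*((n:ℝ≥0∞)+1))⁻¹ ≤ μ (ZS (2*(n+1))) := by
  rw [ZS_eq_psetF, mu_psetF hμ]
  have hnat : 16^(n+1) ≤ 4*(n+1)*(Qz (2*(n+1))).card :=
    le_trans (sixteen_le n) (Nat.mul_le_mul_left _ (card_Qz_ge n))
  set K : ℝ≥0∞ := ((Qz (2*(n+1))).card : ℝ≥0∞) with hK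
  set a : ℝ≥0∞ := (4:ℝ≥0∞)*((n:ℝ≥0∞)+1) with ha
  set b : ℝ≥0∞ := (16:ℝ≥0∞)^(n+1) with hb
  have hpow : ((4:ℝ≥0∞)^(2*(n+1)))⁻¹ = b⁻¹ := by
    rw [hb, pow_mul]
    norm_num
  rw [hpow]
  have h1 : b ≤ a * K := by
    rw [hb, ha, hK]
    calc (16:ℝ≥0∞)^(n+1) = ((16^(n+1) : ℕ) : ℝ≥0∞) := by push_cast; ring
      _ ≤ ((4*(n+1)*(Qz (2*(n+1))).card : ℕ) : ℝ≥0∞) := by exact_mod_cast hnat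
      _ = (4:ℝ≥0∞)*((n:ℝ≥0∞)+1) * ((Qz (2*(n+1))).card : ℝ≥0∞) := by push_cast; ring
  have ha0 : a ≠ 0 := by
    rw [ha]
    exact mul_ne_zero (by norm_num) (by simp)
  have hatop : a ≠ ⊤ := by
    rw [ha]
    exact ENNReal.mul_ne_top (by norm_num) (by
      exact ENNReal.add_ne_top.mpr ⟨ENNReal.natCast_ne_top n, one_ne_top⟩)
  have hb0 : b ≠ 0 := by
    rw [hb]
    exact pow_ne_zero _ (by norm_num)
  have hbtop : b ≠ ⊤ := by
    rw [hb]
    exact ENNReal.pow_ne_top (by norm_num)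
  calc a⁻¹ = a⁻¹ * b * b⁻¹ := by rw [mul_assoc, ENNReal.mul_inv_cancel hb0 hbtop, mul_one]
    _ ≤ a⁻¹ * (a * K) * b⁻¹ := by
        apply mul_le_mul_left
        exact mul_le_mul_right h1 _
    _ = K * b⁻¹ := by rw [← mul_assoc, ENNReal.inv_mul_cancel ha0 hatop, one_mul]

lemma div_ZS : (∑' j : ℕ, μ (ZS (j+1))) = ⊤ := by
  have hinj : Function.Injective (fun n : ℕ => 2*n+1) := by
    intro a b h
    simp only [] at h
    omega
  have h1 : (∑' n : ℕ, μ (ZS ((2*n+1)+1))) ≤ ∑' j : ℕ, μ (ZS (j+1)) :=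
    ENNReal.tsum_comp_le_tsum_of_injective hinj (fun j => μ (ZS (j+1)))
  have h2 : (∑' n : ℕ, ((4:ℝ≥0∞)*((n:ℝ≥0∞)+1))⁻¹) ≤ ∑' n : ℕ, μ (ZS ((2*n+1)+1)) := by
    apply ENNReal.tsum_le_tsum
    intro n
    have : (2*n+1)+1 = 2*(n+1) := by omega
    rw [this]
    exact mu_ZS_even hμ n
  rw [tsum_harm] at h2
  exact top_le_iff.mp (le_trans h2 h1)

theorem recurrence : ∀ᵐ f ∂μ, ∃ᶠ n in atTop, SW n f = 0 :=
  recurrence_ae hμ (div_ZS hμ)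

end diverge


/-! ### The digit measure on sequence space -/

noncomputable def D (z : ℝ) : Seq := fun k => dig k z

lemma measurable_digit4 : Measurable digit4 := by
  have h : digit4 = (fun i : ℤ => (⟨i.toNat % 4, Nat.mod_lt _ (by norm_num)⟩ : Fin 4))
      ∘ (fun y : ℝ => ⌊(4:ℝ)*y⌋) := rfl
  rw [h]
  exact (measurable_of_countable _).comp (Int.measurable_floor.comp (measurable_const_mul 4))

lemma measurable_T : Measurable T := by
  have h : T = fun z : ℝ => Int.fract ((4:ℝ)*z) := rfl
  rw [h]
  exact measurable_fract.comp (measurable_const_mul 4)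

lemma measurable_D : Measurable D :=
  measurable_pi_lambda _ fun k => measurable_digit4.comp (measurable_T.iterate k)

noncomputable def nuD : Measure Seq := (volume.restrict (Set.Ico (0:ℝ) 1)).map D

lemma nuD_cyl (n : ℕ) (c : Seq) : nuD (cylN n c) = ((4:ℝ≥0∞)^n)⁻¹ := by
  rw [nuD, Measure.map_apply measurable_D (cylN_measurableSet n c),
    Measure.restrict_apply (measurable_D (cylN_measurableSet n c))]
  have hset : D ⁻¹' (cylN n c) ∩ Set.Ico (0:ℝ) 1
      = Set.Ico ((valN n c : ℝ)/4^n) ((valN n c + 1 : ℝ)/4^n) := by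
    rw [← digit_set_eq n c]
    ext z
    simp only [Set.mem_inter_iff, Set.mem_preimage, cylN, Set.mem_setOf_eq, D]
    tauto
  rw [hset, Real.volume_Ico]
  have hlen : ((valN n c : ℝ) + 1)/4^n - (valN n c : ℝ)/4^n = ((4:ℝ)^n)⁻¹ := by
    field_simp
    ring
  have hcast : ((valN n c + 1 : ℕ) : ℝ) = (valN n c : ℝ) + 1 := by push_cast; ring
  rw [show ((valN n c + 1 : ℝ))/4^n = ((valN n c : ℝ) + 1)/4^n by norm_num, hlen]
  rw [ENNReal.ofReal_inv_of_pos (by positivity), ENNReal.ofReal_pow (by norm_num)]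
  norm_num

/-! ### Rewriting the digits along the environment-driven bijections -/

section environment

variable (e : Fin 4 → Fin 4 → Fin 3 → Fin 4) (lam : (ℤ × ℤ) → Fin 3) (i₀ : Fin 4)

def st (a : Seq) : ℕ → (ℤ × ℤ) × Fin 4
  | 0 => ((0, 0), i₀)
  | k+1 =>
      let s := st a k
      let j := e (a k) s.2 (lam s.1)
      (s.1 + dirG j, j)

def bseq (a : Seq) (k : ℕ) : Fin 4 :=
  e (a k) (st e lam i₀ a k).2 (lam (st e lam i₀ a k).1)

def bmap (a : Seq) : Seq := fun k => bseq e lam i₀ a k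

lemma st_succ (a : Seq) (k : ℕ) :
    st e lam i₀ a (k+1) = ((st e lam i₀ a k).1 + dirG (bseq e lam i₀ a k), bseq e lam i₀ a k) := rfl

lemma st_fst_eq_SW (a : Seq) : ∀ n, (st e lam i₀ a n).1 = SW n (bmap e lam i₀ a) := by
  intro n
  induction n with
  | zero => rfl
  | succ n ih =>
    rw [st_succ, show SW (n+1) (bmap e lam i₀ a)
      = SW n (bmap e lam i₀ a) + dirG (bmap e lam i₀ a n) from rfl, ← ih]
    rfl

lemma measurable_st (k : ℕ) : Measurable (fun a : Seq => st e lam i₀ a k) := by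
  induction k with
  | zero => exact measurable_const
  | succ k ih =>
    have h : (fun a : Seq => st e lam i₀ a (k+1))
        = (fun p : ((ℤ × ℤ) × Fin 4) × Fin 4 =>
            (p.1.1 + dirG (e p.2 p.1.2 (lam p.1.1)), e p.2 p.1.2 (lam p.1.1)))
          ∘ (fun a : Seq => (st e lam i₀ a k, a k)) := rfl
    rw [h]
    exact (measurable_of_countable _).comp (ih.prodMk (measurable_pi_apply k))

lemma measurable_bmap : Measurable (bmap e lam i₀) := by
  apply measurable_pi_lambda
  intro k
  show Measurable ((fun p : ((ℤ × ℤ) × Fin 4) × Fin 4 => e p.2 p.1.2 (lam p.1.1))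
        ∘ (fun a : Seq => (st e lam i₀ a k, a k)))
  exact (measurable_of_countable _).comp ((measurable_st e lam i₀ k).prodMk (measurable_pi_apply k))

variable (he : ∀ (i : Fin 4) (ω : Fin 3), Function.Bijective (fun j => e j i ω))

/-- the state sequence determined directly by the rewritten digits -/
def ds (c : Seq) : ℕ → (ℤ × ℤ) × Fin 4
  | 0 => ((0, 0), i₀)
  | k+1 => ((ds c k).1 + dirG (c k), c k)

/-- inverse of the exit-direction bijection -/
noncomputable def einv (i : Fin 4) (ω : Fin 3) : Fin 4 ≃ Fin 4 :=
  Equiv.ofBijective _ (he i ω)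

/-- the unique digit sequence whose rewriting is `c` -/
noncomputable def dec (c : Seq) (k : ℕ) : Fin 4 :=
  (einv e he (ds i₀ c k).2 (lam (ds i₀ c k).1)).symm (c k)

lemma dec_spec (c : Seq) (k : ℕ) :
    e (dec e lam i₀ he c k) (ds i₀ c k).2 (lam (ds i₀ c k).1) = c k := by
  have h := (einv e he (ds i₀ c k).2 (lam (ds i₀ c k).1)).apply_symm_apply (c k)
  exact h

lemma bmap_eq_iff (c : Seq) (n : ℕ) (a : Seq) :
    (∀ k < n, bseq e lam i₀ a k = c k) ↔ (∀ k < n, a k = dec e lam i₀ he c k) := by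
  have key : ∀ m : ℕ, ((∀ k < m, bseq e lam i₀ a k = c k) ∨ (∀ k < m, a k = dec e lam i₀ he c k)) →
      (st e lam i₀ a m = ds i₀ c m ∧ (∀ k < m, bseq e lam i₀ a k = c k)
        ∧ (∀ k < m, a k = dec e lam i₀ he c k)) := by
    intro m
    induction m with
    | zero => intro _; exact ⟨rfl, fun k hk => absurd hk (by omega), fun k hk => absurd hk (by omega)⟩
    | succ m ih =>
      intro hcase
      have hprev : st e lam i₀ a m = ds i₀ c m ∧ (∀ k < m, bseq e lam i₀ a k = c k)
          ∧ (∀ k < m, a k = dec e lam i₀ he c k) := by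
        apply ih
        rcases hcase with h | h
        · exact Or.inl (fun k hk => h k (by omega))
        · exact Or.inr (fun k hk => h k (by omega))
      obtain ⟨hst, hb, ha⟩ := hprev
      -- establish the `m`-th step in both forms
      have hstep : bseq e lam i₀ a m = c m ∧ a m = dec e lam i₀ he c m := by
        rcases hcase with h | h
        · have hbm : bseq e lam i₀ a m = c m := h m (by omega)
          refine ⟨hbm, ?_⟩
          have h1 : e (a m) (ds i₀ c m).2 (lam (ds i₀ c m).1) = c m := by
            rw [← hst]; exact hbm
          have h2 := dec_spec e lam i₀ he c m
          have hinj := (he (ds i₀ c m).2 (lam (ds i₀ c m).1)).1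
          exact hinj (h1.trans h2.symm)
        · have ham : a m = dec e lam i₀ he c m := h m (by omega)
          refine ⟨?_, ham⟩
          have : bseq e lam i₀ a m = e (a m) (ds i₀ c m).2 (lam (ds i₀ c m).1) := by
            rw [bseq, hst]
          rw [this, ham]
          exact dec_spec e lam i₀ he c m
      refine ⟨?_, ?_, ?_⟩
      · rw [st_succ, hst, hstep.1]; rfl
      · intro k hk
        rcases Nat.lt_succ_iff_lt_or_eq.mp hk with h' | rfl
        · exact hb k h'
        · exact hstep.1
      · intro k hk
        rcases Nat.lt_succ_iff_lt_or_eq.mp hk with h' | rfl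
        · exact ha k h'
        · exact hstep.2
  constructor
  · intro h; exact (key n (Or.inl h)).2.2
  · intro h; exact (key n (Or.inr h)).2.1

lemma bmap_preimage_cylN (c : Seq) (n : ℕ) :
    bmap e lam i₀ ⁻¹' (cylN n c) = cylN n (dec e lam i₀ he c) := by
  ext a
  simp only [Set.mem_preimage, cylN, Set.mem_setOf_eq]
  exact bmap_eq_iff e lam i₀ he c n a

noncomputable def nuB : Measure Seq := nuD.map (bmap e lam i₀)

include he in
lemma nuB_cyl (n : ℕ) (c : Seq) : nuB e lam i₀ (cylN n c) = ((4:ℝ≥0∞)^n)⁻¹ := by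
  rw [nuB, Measure.map_apply (measurable_bmap e lam i₀) (cylN_measurableSet n c),
    bmap_preimage_cylN e lam i₀ he, nuD_cyl]

end environment

/-- the set of recurrent sequences -/
def FREQ : Set Seq := {f | ∃ᶠ n in atTop, SW n f = 0}

lemma measurableSet_FREQ : MeasurableSet FREQ := by
  have h : FREQ = ⋂ m, ⋃ n, ⋃ (_ : m ≤ n), ZS n := by
    ext f
    simp only [FREQ, Set.mem_setOf_eq, frequently_atTop, Set.mem_iInter, Set.mem_iUnion, ZS]
    constructor
    · intro hf m
      obtain ⟨b, hb1, hb2⟩ := hf m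
      exact ⟨b, hb1, hb2⟩
    · intro hf m
      obtain ⟨b, hb1, hb2⟩ := hf m
      exact ⟨b, hb1, hb2⟩
  rw [h]
  exact MeasurableSet.iInter fun m => MeasurableSet.iUnion fun n =>
    MeasurableSet.iUnion fun _ => measurableSet_ZS n


lemma traj_link (e : Fin 4 → Fin 4 → Fin 3 → Fin 4) (lam : (ℤ × ℤ) → Fin 3) (i₀ : Fin 4)
    (z w : ℝ) :
    ∀ n, (traj4 e lam ((z, w), i₀) n).1 = (st e lam i₀ (D z) n).1
      ∧ (traj4 e lam ((z, w), i₀) n).2.1.1 = T^[n] z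
      ∧ (traj4 e lam ((z, w), i₀) n).2.2 = (st e lam i₀ (D z) n).2 := by
  intro n
  induction n with
  | zero => exact ⟨rfl, rfl, rfl⟩
  | succ n ih =>
    obtain ⟨h1, h2, h3⟩ := ih
    set x : (ℝ × ℝ) × Fin 4 := ((z, w), i₀) with hx
    have hstep : traj4 e lam x (n+1)
        = ((traj4 e lam x n).1
            + dirG (e (digit4 (traj4 e lam x n).2.1.1) (traj4 e lam x n).2.2
                (lam (traj4 e lam x n).1)),
           (baker4 (traj4 e lam x n).2.1,
            e (digit4 (traj4 e lam x n).2.1.1) (traj4 e lam x n).2.2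
                (lam (traj4 e lam x n).1))) := rfl
    have hdig : digit4 ((traj4 e lam x n).2.1.1) = D z n := by
      rw [h2]; rfl
    have hj : e (digit4 (traj4 e lam x n).2.1.1) (traj4 e lam x n).2.2 (lam (traj4 e lam x n).1)
        = bseq e lam i₀ (D z) n := by
      rw [hdig, h3, h1]; rfl
    refine ⟨?_, ?_, ?_⟩
    · rw [hstep]
      show (traj4 e lam x n).1 + dirG _ = _
      rw [hj, h1, st_succ]
    · rw [hstep]
      show (baker4 (traj4 e lam x n).2.1).1 = T^[n+1] z
      have hb : (baker4 (traj4 e lam x n).2.1).1 = T ((traj4 e lam x n).2.1.1) := rfl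
      rw [hb, h2, ← Function.iterate_succ_apply' T n z]
    · rw [hstep]
      show e (digit4 (traj4 e lam x n).2.1.1) (traj4 e lam x n).2.2 (lam (traj4 e lam x n).1)
          = (st e lam i₀ (D z) (n+1)).2
      rw [hj, st_succ]


end Stmt7

/-- **toy model mimicking the standard random walk: recurrence in every
fiber.** If for every incoming direction `i` and state `ω` the map `j ↦ e(j,i,ω)`
is a bijection onto `G`, then in every environment `lam`, for `μ₁`-almost every
initial condition `x`, the position `γ_n(x, lam)` equals `(0,0)` infinitely often. -/
theorem stmt7 (e : Fin 4 → Fin 4 → Fin 3 → Fin 4)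
    (he : ∀ (i : Fin 4) (ω : Fin 3), Function.Bijective (fun j => e j i ω))
    (lam : (ℤ × ℤ) → Fin 3) :
    ∀ᵐ x ∂muOne, ∃ᶠ n in atTop, (traj4 e lam x n).1 = ((0 : ℤ), (0 : ℤ)) := by
  classical
  open Stmt7 in
  set BAD : Fin 4 → Set ℝ := fun i => (fun z => Stmt7.bmap e lam i (Stmt7.D z)) ⁻¹' (Stmt7.FREQ)ᶜ
    with hBAD
  have hBADmeas : ∀ i, MeasurableSet (BAD i) := fun i =>
    ((Stmt7.measurable_bmap e lam i).comp Stmt7.measurable_D) Stmt7.measurableSet_FREQ.compl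
  have hBAD0 : ∀ i, volume (BAD i ∩ Set.Ico (0:ℝ) 1) = 0 := by
    intro i
    have hrec : ∀ᵐ f ∂(Stmt7.nuB e lam i), ∃ᶠ n in Filter.atTop, Stmt7.SW n f = 0 :=
      Stmt7.recurrence (fun n c => Stmt7.nuB_cyl e lam i he n c)
    have h0 : Stmt7.nuB e lam i (Stmt7.FREQ)ᶜ = 0 := by
      have := ae_iff.mp hrec
      convert this using 2
      rfl
    rw [Stmt7.nuB, Measure.map_apply (Stmt7.measurable_bmap e lam i)
        Stmt7.measurableSet_FREQ.compl, Stmt7.nuD,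
      Measure.map_apply Stmt7.measurable_D
        ((Stmt7.measurable_bmap e lam i) Stmt7.measurableSet_FREQ.compl),
      Measure.restrict_apply
        (Stmt7.measurable_D ((Stmt7.measurable_bmap e lam i) Stmt7.measurableSet_FREQ.compl))]
      at h0
    have hseteq : Stmt7.D ⁻¹' (Stmt7.bmap e lam i ⁻¹' (Stmt7.FREQ)ᶜ) = BAD i := rfl
    rwa [hseteq] at h0
  rw [ae_iff]
  have hsub : {x : (ℝ × ℝ) × Fin 4 | ¬ ∃ᶠ n in atTop, (traj4 e lam x n).1 = ((0 : ℤ), (0 : ℤ))}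
      ⊆ ⋃ i : Fin 4, ((BAD i) ×ˢ (Set.univ : Set ℝ)) ×ˢ ({i} : Set (Fin 4)) := by
    rintro ⟨⟨z, w⟩, i⟩ hx
    simp only [Set.mem_setOf_eq] at hx
    refine Set.mem_iUnion.mpr ⟨i, ⟨⟨?_, trivial⟩, rfl⟩⟩
    rw [hBAD]
    simp only [Set.mem_preimage, Set.mem_compl_iff]
    intro hmem
    apply hx
    have hfreq : ∃ᶠ n in atTop, Stmt7.SW n (Stmt7.bmap e lam i (Stmt7.D z)) = 0 := hmem
    apply hfreq.mono
    intro n hn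
    have hl := (Stmt7.traj_link e lam i z w n).1
    rw [hl, Stmt7.st_fst_eq_SW, hn]
    rfl
  refine measure_mono_null hsub ?_
  have hmu : muOne = (volume.restrict (Set.Ico (0:ℝ) 1 ×ˢ Set.Ico (0:ℝ) 1)).prod
      ((4 : ℝ≥0∞)⁻¹ • Measure.count) := rfl
  rw [hmu]
  apply measure_iUnion_null
  intro i
  rw [Measure.prod_prod]
  have h1 : (volume.restrict (Set.Ico (0:ℝ) 1 ×ˢ Set.Ico (0:ℝ) 1)) ((BAD i) ×ˢ Set.univ) = 0 := by
    rw [Measure.restrict_apply ((hBADmeas i).prod MeasurableSet.univ)]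
    rw [Set.prod_inter_prod]
    rw [Measure.volume_eq_prod, Measure.prod_prod, hBAD0 i, zero_mul]
  rw [h1, zero_mul]
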